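/- For every i ∈ [0, N−1] and every j ∈ K_i: if w(g_j) = 2·w(g_i) then S_j ∩ S_i = S_i, and if w(g_j) = w(g_i) then S_j ∩ S_i = S_i \ {k} for some k ∈ S_i. -/

import Mathlib

noncomputable section
open scoped Classical
open Finset

/-- The 2×2 binary matrix [[1,0],[1,1]], as an ℕ-indexed function (zero outside range). -/
def G2 (a b : ℕ) : ZMod 2 :=
  if a = 0 ∧ b = 0 then 1
  else if a = 1 ∧ b = 0 then 1
  else if a = 1 ∧ b = 1 then 1
  else 0

/-- `G n i c` is the (i,c) entry of the n-th Kronecker power over F₂ of [[1,0],[1,1]],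
for row/column indices i, c ∈ [0, 2^n − 1] (standard row-major index flattening). -/
def G : ℕ → ℕ → ℕ → ZMod 2
  | 0 => fun i c => if i = 0 ∧ c = 0 then 1 else 0
  | n + 1 => fun i c => G2 (i / 2 ^ n) (c / 2 ^ n) * G n (i % 2 ^ n) (c % 2 ^ n)

/-- Row i of the polar transform G_N (N = 2^n), as a vector of its coordinates. -/
def g (n i : ℕ) : ℕ → ZMod 2 := fun c => G n i c

/-- S_i ⊆ [0, n−1]: the support of the binary representation of i. -/
def S (n i : ℕ) : Finset ℕ := (Finset.range n).filter fun a => i.testBit a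

/-- T_i = [0, n−1] \ S_i. -/
def T (n i : ℕ) : Finset ℕ := Finset.range n \ S n i

/-- Hamming weight of a vector whose coordinates are indexed by [0, 2^n − 1]. -/
def wt (n : ℕ) (v : ℕ → ZMod 2) : ℕ :=
  ((Finset.range (2 ^ n)).filter fun c => v c ≠ 0).card

/-- The index in [0, 2^n − 1] whose binary support is the set U ⊆ [0, n−1]. -/
def idx (U : Finset ℕ) : ℕ := ∑ a ∈ U, 2 ^ a

/-- K_i = {j ∈ [i+1, N−1] : w(g_j) ≥ w(g_i ⊕ g_j) and w(g_i ⊕ g_j) = w(g_i)}. -/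
def K (n i : ℕ) : Finset ℕ :=
  (Finset.Ico (i + 1) (2 ^ n)).filter fun j =>
    wt n (g n i + g n j) ≤ wt n (g n j) ∧ wt n (g n i + g n j) = wt n (g n i)

/-- One generating step of the partial order on [0, 2^n − 1]. -/
def poStep (n i j : ℕ) : Prop :=
  i < 2 ^ n ∧ j < 2 ^ n ∧
    (S n i ⊆ S n j ∨
      ∃ a b, a ∈ S n i ∧ b ∉ S n i ∧ a < b ∧ S n j = insert b (S n i \ {a}))

/-- The partial order ⪯: reflexive–transitive closure of the generating relation. -/
def po (n : ℕ) : ℕ → ℕ → Prop := Relation.ReflTransGen (poStep n)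

/-- Partial Order Property of an information set I ⊆ [0, 2^n − 1]. -/
def POP (n : ℕ) (I : Finset ℕ) : Prop :=
  ∀ i ∈ I, ∀ j, j < 2 ^ n → po n i j → j ∈ I

/-- The code C(I): all F₂-linear combinations (i.e. subset sums) of the rows g_i, i ∈ I. -/
def codewords (n : ℕ) (I : Finset ℕ) : Finset (ℕ → ZMod 2) :=
  I.powerset.image fun H => ∑ h ∈ H, g n h

/-- A_w(I): the number of codewords of C(I) of Hamming weight w. -/
def A (n : ℕ) (I : Finset ℕ) (w : ℕ) : ℕ :=
  ((codewords n I).filter fun v => wt n v = w).card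

/-- The coset C_i(I) = {g_i ⊕ ⊕_{h∈H} g_h : H ⊆ I \ [0,i]}. -/
def coset (n : ℕ) (I : Finset ℕ) (i : ℕ) : Finset (ℕ → ZMod 2) :=
  ((I.filter fun h => i < h).powerset).image fun H => g n i + ∑ h ∈ H, g n h

/-- A_{i,w}(I): the number of vectors of Hamming weight w in the coset C_i(I). -/
def Ai (n : ℕ) (I : Finset ℕ) (i w : ℕ) : ℕ :=
  ((coset n I i).filter fun v => wt n v = w).card

-- AUX LEMMAS START
lemma mem_bitIndices_iff (m : ℕ) : ∀ a, a ∈ m.bitIndices ↔ m.testBit a = true := by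
  induction m using Nat.strong_induction_on with
  | _ m ih =>
    match m with
    | 0 => simp
    | (m+1) =>
      intro a
      rcases Nat.even_or_odd (m+1) with ⟨k, hk⟩ | ⟨k, hk⟩
      · rw [hk, show k + k = 2 * k from by ring, Nat.bitIndices_two_mul]
        cases a with
        | zero => simp [Nat.testBit_zero, Nat.mul_mod_right]
        | succ a =>
          rw [Nat.testBit_succ, show 2 * k / 2 = k from by omega,
            ← ih k (by omega) a]
          simp
      · rw [hk, Nat.bitIndices_two_mul_add_one]
        cases a with
        | zero =>
          simp [Nat.testBit_zero]
        | succ a =>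
          rw [Nat.testBit_succ, show (2 * k + 1) / 2 = k from by omega,
            ← ih k (by omega) a]
          simp

lemma testBit_idx (U : Finset ℕ) (a : ℕ) : (idx U).testBit a = true ↔ a ∈ U := by
  rw [← mem_bitIndices_iff, ← List.mem_toFinset, idx,
    Finset.toFinset_bitIndices_twoPowSum]

lemma idx_S {n c : ℕ} (hc : c < 2 ^ n) : idx (S n c) = c := by
  have hS : S n c = c.bitIndices.toFinset := by
    ext a
    simp only [S, Finset.mem_filter, Finset.mem_range, List.mem_toFinset,
      mem_bitIndices_iff]
    constructor
    · rintro ⟨-, h⟩; exact h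
    · intro h
      refine ⟨?_, h⟩
      by_contra ha
      rw [Nat.testBit_lt_two_pow
        (lt_of_lt_of_le hc (Nat.pow_le_pow_right (by norm_num) (by omega)))] at h
      exact absurd h (by simp)
  rw [hS, idx, Finset.twoPowSum_toFinset_bitIndices]

lemma S_idx {n : ℕ} {U : Finset ℕ} (hU : U ⊆ Finset.range n) : S n (idx U) = U := by
  ext a
  simp only [S, Finset.mem_filter, Finset.mem_range, testBit_idx]
  exact ⟨fun h => h.2, fun h => ⟨Finset.mem_range.mp (hU h), h⟩⟩

lemma sum_two_pow_range (n : ℕ) : ∑ a ∈ Finset.range n, 2 ^ a = 2 ^ n - 1 := by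
  induction n with
  | zero => simp
  | succ n ih =>
    rw [Finset.sum_range_succ, ih]
    have h1 : 1 ≤ 2 ^ n := Nat.one_le_two_pow
    have h2 : 2 ^ (n + 1) = 2 * 2 ^ n := by rw [pow_succ]; ring
    omega

lemma idx_lt {n : ℕ} {U : Finset ℕ} (hU : U ⊆ Finset.range n) : idx U < 2 ^ n := by
  have h1 : idx U ≤ ∑ a ∈ Finset.range n, 2 ^ a :=
    Finset.sum_le_sum_of_subset hU
  rw [sum_two_pow_range] at h1
  have h2 : 1 ≤ 2 ^ n := Nat.one_le_two_pow
  omega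

lemma S_subset_range (n i : ℕ) : S n i ⊆ Finset.range n := Finset.filter_subset _ _

lemma G_eq (n : ℕ) : ∀ i c, G n i c =
    if i < 2 ^ n ∧ c < 2 ^ n ∧ ∀ a, c.testBit a = true → i.testBit a = true
    then 1 else 0 := by
  induction n with
  | zero =>
    intro i c
    show (if i = 0 ∧ c = 0 then (1 : ZMod 2) else 0) = _
    by_cases h : i = 0 ∧ c = 0
    · rw [if_pos h, if_pos]
      refine ⟨by omega, by omega, fun a ha => ?_⟩
      rw [h.2] at ha; simp at ha
    · rw [if_neg h, if_neg]
      rintro ⟨h1, h2, -⟩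
      rw [pow_zero] at h1 h2
      exact h ⟨by omega, by omega⟩
  | succ n ih =>
    intro i c
    show G2 (i / 2 ^ n) (c / 2 ^ n) * G n (i % 2 ^ n) (c % 2 ^ n) = _
    have hpos : 0 < 2 ^ n := Nat.two_pow_pos n
    have hps : 2 ^ (n + 1) = 2 * 2 ^ n := by rw [pow_succ]; ring
    by_cases hi : i < 2 ^ (n + 1)
    swap
    · have h2 : 2 ≤ i / 2 ^ n := by
        rw [Nat.le_div_iff_mul_le hpos]; omega
      rw [if_neg (by tauto)]
      have hz : G2 (i / 2 ^ n) (c / 2 ^ n) = 0 := by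
        unfold G2
        rw [if_neg (by omega), if_neg (by omega), if_neg (by omega)]
      rw [hz, zero_mul]
    by_cases hc : c < 2 ^ (n + 1)
    swap
    · have h2 : 2 ≤ c / 2 ^ n := by
        rw [Nat.le_div_iff_mul_le hpos]; omega
      rw [if_neg (by tauto)]
      have hz : G2 (i / 2 ^ n) (c / 2 ^ n) = 0 := by
        unfold G2
        rw [if_neg (by omega), if_neg (by omega), if_neg (by omega)]
      rw [hz, zero_mul]
    have hA : i / 2 ^ n < 2 := by
      rw [Nat.div_lt_iff_lt_mul hpos]; omega
    have hB : c / 2 ^ n < 2 := by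
      rw [Nat.div_lt_iff_lt_mul hpos]; omega
    have hbitI : i.testBit n = decide (i / 2 ^ n = 1) := by
      rw [Nat.testBit_eq_decide_div_mod_eq, Nat.mod_eq_of_lt hA]
    have hbitC : c.testBit n = decide (c / 2 ^ n = 1) := by
      rw [Nat.testBit_eq_decide_div_mod_eq, Nat.mod_eq_of_lt hB]
    have highbits : ∀ a, n < a → c.testBit a = false := by
      intro a ha
      exact Nat.testBit_lt_two_pow
        (lt_of_lt_of_le hc (Nat.pow_le_pow_right (by norm_num) (by omega)))
    have hmod : (∀ a, (c % 2 ^ n).testBit a = true → (i % 2 ^ n).testBit a = true)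
        ↔ ∀ a, a < n → c.testBit a = true → i.testBit a = true := by
      constructor
      · intro h a han hca
        have := h a (by rw [Nat.testBit_mod_two_pow]; simp [han, hca])
        rw [Nat.testBit_mod_two_pow, Bool.and_eq_true] at this
        exact this.2
      · intro h a hca
        rw [Nat.testBit_mod_two_pow, Bool.and_eq_true] at hca ⊢
        exact ⟨hca.1, h a (by simpa using hca.1) hca.2⟩
    have finish : (c.testBit n = true → i.testBit n = true) →
        G2 (i / 2 ^ n) (c / 2 ^ n) = 1 →
        G2 (i / 2 ^ n) (c / 2 ^ n) * G n (i % 2 ^ n) (c % 2 ^ n) =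
          if i < 2 ^ (n + 1) ∧ c < 2 ^ (n + 1) ∧
            (∀ a, c.testBit a = true → i.testBit a = true) then 1 else 0 := by
      intro hstep h1
      show G2 (i / 2 ^ n) (c / 2 ^ n) * G n (i % 2 ^ n) (c % 2 ^ n) = _
      rw [ih, h1, one_mul]
      congr 1
      rw [eq_iff_iff]
      constructor
      · rintro ⟨-, -, h⟩
        rw [hmod] at h
        refine ⟨hi, hc, fun a hca => ?_⟩
        rcases lt_trichotomy a n with h1 | rfl | h1
        · exact h a h1 hca
        · exact hstep hca
        · rw [highbits a h1] at hca; exact absurd hca (by simp)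
      · rintro ⟨-, -, h⟩
        exact ⟨Nat.mod_lt _ hpos, Nat.mod_lt _ hpos,
          hmod.mpr fun a _ hca => h a hca⟩
    have hAB : i / 2 ^ n = 0 ∨ i / 2 ^ n = 1 := by
      have h := hA
      generalize i / 2 ^ n = A at h ⊢
      omega
    have hBB : c / 2 ^ n = 0 ∨ c / 2 ^ n = 1 := by
      have h := hB
      generalize c / 2 ^ n = A at h ⊢
      omega
    rcases hAB with hA' | hA' <;> rcases hBB with hB' | hB'
    · exact finish (by rw [hbitC, hB']; simp) (by rw [hA', hB']; rfl)
    · -- A = 0, B = 1 : entry is zero and condition fails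
      have hz : G2 (i / 2 ^ n) (c / 2 ^ n) = 0 := by
        rw [hA', hB']; rfl
      rw [hz, zero_mul, if_neg]
      rintro ⟨-, -, h⟩
      have := h n (by rw [hbitC, hB']; simp)
      rw [hbitI, hA'] at this
      simp at this
    · exact finish (by rw [hbitI, hA']; simp) (by rw [hA', hB']; rfl)
    · exact finish (by rw [hbitI, hA']; simp) (by rw [hA', hB']; rfl)

lemma G_eq' (n i c : ℕ) : G n i c =
    if i < 2 ^ n ∧ c < 2 ^ n ∧ S n c ⊆ S n i then 1 else 0 := by
  rw [G_eq]
  congr 1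
  rw [eq_iff_iff]
  constructor
  · rintro ⟨h1, h2, h3⟩
    refine ⟨h1, h2, fun a ha => ?_⟩
    simp only [S, Finset.mem_filter, Finset.mem_range] at ha ⊢
    exact ⟨ha.1, h3 a ha.2⟩
  · rintro ⟨h1, h2, h3⟩
    refine ⟨h1, h2, fun a ha => ?_⟩
    have han : a < n := by
      by_contra h
      rw [Nat.testBit_lt_two_pow
        (lt_of_lt_of_le h2 (Nat.pow_le_pow_right (by norm_num) (by omega)))] at ha
      exact absurd ha (by simp)
    have : a ∈ S n c := by
      simp only [S, Finset.mem_filter, Finset.mem_range]; exact ⟨han, ha⟩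
    have := h3 this
    simp only [S, Finset.mem_filter, Finset.mem_range] at this
    exact this.2

lemma card_subsets {n : ℕ} {V : Finset ℕ} (hV : V ⊆ Finset.range n) :
    ((Finset.range (2 ^ n)).filter fun c => S n c ⊆ V).card = 2 ^ V.card := by
  rw [← Finset.card_powerset]
  apply Finset.card_bij' (fun c _ => S n c) (fun U _ => idx U)
  · intro c hc
    rw [Finset.mem_filter] at hc
    exact Finset.mem_powerset.mpr hc.2
  · intro U hU
    rw [Finset.mem_powerset] at hU
    have hUr : U ⊆ Finset.range n := hU.trans hV
    rw [Finset.mem_filter, Finset.mem_range]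
    exact ⟨idx_lt hUr, by rw [S_idx hUr]; exact hU⟩
  · intro c hc
    rw [Finset.mem_filter, Finset.mem_range] at hc
    exact idx_S hc.1
  · intro U hU
    rw [Finset.mem_powerset] at hU
    exact S_idx (hU.trans hV)

lemma supp_g {n i : ℕ} (hi : i < 2 ^ n) :
    ((Finset.range (2 ^ n)).filter fun c => g n i c ≠ 0) =
      (Finset.range (2 ^ n)).filter fun c => S n c ⊆ S n i := by
  ext c
  simp only [Finset.mem_filter, Finset.mem_range]
  simp only [g]
  constructor
  · rintro ⟨hc, h⟩
    rw [G_eq'] at h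
    refine ⟨hc, ?_⟩
    by_contra hs
    rw [if_neg (by tauto)] at h
    exact h rfl
  · rintro ⟨hc, h⟩
    refine ⟨hc, ?_⟩
    rw [G_eq', if_pos ⟨hi, hc, h⟩]
    exact one_ne_zero

lemma wt_g {n i : ℕ} (hi : i < 2 ^ n) : wt n (g n i) = 2 ^ (S n i).card := by
  rw [wt, supp_g hi, card_subsets (S_subset_range n i)]

lemma wt_add_eq {n i j : ℕ} (hi : i < 2 ^ n) (hj : j < 2 ^ n) :
    wt n (g n i + g n j) + 2 * 2 ^ (S n i ∩ S n j).card =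
      2 ^ (S n i).card + 2 ^ (S n j).card := by
  classical
  set A := (Finset.range (2 ^ n)).filter fun c => g n i c ≠ 0 with hA
  set B := (Finset.range (2 ^ n)).filter fun c => g n j c ≠ 0 with hB
  have hwi : A.card = 2 ^ (S n i).card := by rw [hA, supp_g hi, card_subsets (S_subset_range n i)]
  have hwj : B.card = 2 ^ (S n j).card := by rw [hB, supp_g hj, card_subsets (S_subset_range n j)]
  have hABi : (A ∩ B).card = 2 ^ (S n i ∩ S n j).card := by
    have hset : A ∩ B = (Finset.range (2 ^ n)).filter fun c => S n c ⊆ S n i ∩ S n j := by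
      rw [hA, hB, supp_g hi, supp_g hj]
      ext c
      simp only [Finset.mem_inter, Finset.mem_filter, Finset.mem_range,
        Finset.subset_inter_iff]
      tauto
    rw [hset]
    exact card_subsets ((Finset.inter_subset_left).trans (S_subset_range n i))
  have hsupp : (Finset.range (2 ^ n)).filter (fun c => (g n i + g n j) c ≠ 0) =
      (A ∪ B) \ (A ∩ B) := by
    ext c
    simp only [hA, hB, Finset.mem_sdiff, Finset.mem_union, Finset.mem_inter,
      Finset.mem_filter, Finset.mem_range, Pi.add_apply]
    constructor
    · rintro ⟨hc, h⟩
      have key : ((g n i c ≠ 0) ∨ (g n j c ≠ 0)) ∧ ¬((g n i c ≠ 0) ∧ (g n j c ≠ 0)) := by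
        revert h
        generalize g n i c = x
        generalize g n j c = y
        revert x y; decide
      exact ⟨by tauto, by tauto⟩
    · rintro ⟨h1, h2⟩
      have hc : c < 2 ^ n := by tauto
      refine ⟨hc, ?_⟩
      have key1 : (g n i c ≠ 0) ∨ (g n j c ≠ 0) := by tauto
      have key2 : ¬((g n i c ≠ 0) ∧ (g n j c ≠ 0)) := by tauto
      revert key1 key2
      generalize g n i c = x
      generalize g n j c = y
      revert x y; decide
  have hsub : A ∩ B ⊆ A ∪ B := (Finset.inter_subset_left).trans Finset.subset_union_left
  have hcard := Finset.card_union_add_card_inter A B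
  have hsd : ((A ∪ B) \ (A ∩ B)).card = (A ∪ B).card - (A ∩ B).card :=
    Finset.card_sdiff_of_subset hsub
  have hle : (A ∩ B).card ≤ (A ∪ B).card := Finset.card_le_card hsub
  rw [wt, hsupp, hsd, hABi] at *
  omega
-- AUX LEMMAS END

/-- for j ∈ K_i, if w(g_j) = 2·w(g_i) then S_j ∩ S_i = S_i, and if
w(g_j) = w(g_i) then S_j ∩ S_i = S_i \ {k} for some k ∈ S_i. -/
theorem K_intersection (n : ℕ) (hn : 1 ≤ n) (i : ℕ) (hi : i < 2 ^ n)
    (j : ℕ) (hj : j ∈ K n i) :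
    (wt n (g n j) = 2 * wt n (g n i) → S n j ∩ S n i = S n i) ∧
    (wt n (g n j) = wt n (g n i) → ∃ k ∈ S n i, S n j ∩ S n i = S n i \ {k}) := by
  rw [K, Finset.mem_filter, Finset.mem_Ico] at hj
  obtain ⟨⟨hij, hjlt⟩, hle, heq⟩ := hj
  have hwi : wt n (g n i) = 2 ^ (S n i).card := wt_g hi
  have hwj : wt n (g n j) = 2 ^ (S n j).card := wt_g hjlt
  have hadd := wt_add_eq hi hjlt
  rw [heq, hwi] at hadd
  have hbt : 2 ^ (S n j).card = 2 ^ ((S n i ∩ S n j).card + 1) := by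
    rw [pow_succ]
    omega
  have hb_eq : (S n j).card = (S n i ∩ S n j).card + 1 :=
    Nat.pow_right_injective (le_refl 2) hbt
  have hti : S n i ∩ S n j ⊆ S n i := Finset.inter_subset_left
  constructor
  · intro hw
    rw [hwi, hwj] at hw
    have hba : (S n j).card = (S n i).card + 1 := by
      apply Nat.pow_right_injective (le_refl 2)
      show (2:ℕ) ^ (S n j).card = 2 ^ ((S n i).card + 1)
      rw [pow_succ]
      omega
    have hta : (S n i ∩ S n j).card = (S n i).card := by omega
    have := Finset.eq_of_subset_of_card_le hti (by omega)
    rw [Finset.inter_comm]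
    exact this
  · intro hw
    rw [hwi, hwj] at hw
    have hba : (S n j).card = (S n i).card :=
      Nat.pow_right_injective (le_refl 2) hw
    have hcard : (S n i \ (S n i ∩ S n j)).card = 1 := by
      rw [Finset.card_sdiff_of_subset hti]
      omega
    obtain ⟨k, hk⟩ := Finset.card_eq_one.mp hcard
    have hkmem : k ∈ S n i := by
      have hmem : k ∈ S n i \ (S n i ∩ S n j) := by
        rw [hk]; exact Finset.mem_singleton_self k
      exact (Finset.mem_sdiff.mp hmem).1
    refine ⟨k, hkmem, ?_⟩
    rw [Finset.inter_comm, ← hk, Finset.sdiff_sdiff_eq_self hti]
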